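/- Let W ⊆ V̂ ⊆ [n] and U = [n]∖V̂, fix a graph Ĝ with vertex set V̂, and fix a (possibly repeating) sequence v₁,…,v_t ∈ W. Let G be a uniformly random graph on [n] conditioned on G[V̂] = Ĝ, and let G′ = G*v₁*⋯*v_t. Partition the pairs of [n] via E₁ = {pairs inside V̂} ∪ {pairs with one end in W and one end in U} and E₂ = {pairs inside U} ∪ {pairs with one end in V̂∖W and one end in U}. Then E(G′)∩E₂ is uniformly distributed over subsets of E₂ and independent of E(G)∩E₁; that is, for every A ⊆ E₁ and every B ⊆ E₂, P[E(G)∩E₁ = A and E(G′)∩E₂ = B] = P[E(G)∩E₁ = A]·2^{−|E₂|}. -/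

import Mathlib

open Finset

variable {V : Type*}

/-- Local complementation at `v`: complement the induced subgraph on the
neighborhood of `v`. -/
def localComp (G : SimpleGraph V) (v : V) : SimpleGraph V where
  Adj u w := (G.Adj v u ∧ G.Adj v w ∧ u ≠ w ∧ ¬ G.Adj u w) ∨
    (¬ (G.Adj v u ∧ G.Adj v w) ∧ G.Adj u w)
  symm := by
    constructor
    intro u w h
    rcases h with ⟨h1, h2, h3, h4⟩ | ⟨h1, h2⟩
    · exact Or.inl ⟨h2, h1, h3.symm, fun a => h4 a.symm⟩
    · exact Or.inr ⟨fun hc => h1 ⟨hc.2, hc.1⟩, h2.symm⟩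
  loopless := by
    constructor
    rintro u (⟨-, -, h, -⟩ | ⟨-, h⟩)
    · exact h rfl
    · exact G.irrefl h

/-- Pivot at an edge `uv`: `G × uv = G * u * v * u`. -/
def pivotGraph (G : SimpleGraph V) (u v : V) : SimpleGraph V :=
  localComp (localComp (localComp G u) v) u

/-- Delete a vertex from a graph. -/
def deleteVertex (G : SimpleGraph V) (v : V) : SimpleGraph V where
  Adj a b := G.Adj a b ∧ a ≠ v ∧ b ≠ v
  symm := ⟨fun _ _ h => ⟨h.1.symm, h.2.2, h.2.1⟩⟩
  loopless := ⟨fun a h => G.irrefl h.1⟩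

lemma localComp_adj (G : SimpleGraph V) (v u w : V) :
    (localComp G v).Adj u w ↔ (G.Adj v u ∧ G.Adj v w ∧ u ≠ w ∧ ¬ G.Adj u w) ∨
      (¬ (G.Adj v u ∧ G.Adj v w) ∧ G.Adj u w) := Iff.rfl

/-- Replace the adjacencies of `G` on pairs in `E2` by membership in `S`. -/
def patch (E2 S : Set (Sym2 V)) (G : SimpleGraph V) : SimpleGraph V where
  Adj u w := (s(u, w) ∈ E2 ∧ s(u, w) ∈ S ∧ u ≠ w) ∨ (s(u, w) ∉ E2 ∧ G.Adj u w)
  symm := by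
    constructor
    intro u w h
    rw [Sym2.eq_swap]
    rcases h with ⟨h1, h2, h3⟩ | ⟨h1, h2⟩
    · exact Or.inl ⟨h1, h2, h3.symm⟩
    · exact Or.inr ⟨h1, h2.symm⟩
  loopless := by
    constructor
    rintro u (⟨-, -, h⟩ | ⟨-, h⟩)
    · exact h rfl
    · exact G.irrefl h

lemma patch_adj (E2 S : Set (Sym2 V)) (G : SimpleGraph V) (u w : V) :
    (patch E2 S G).Adj u w ↔
      (s(u, w) ∈ E2 ∧ s(u, w) ∈ S ∧ u ≠ w) ∨ (s(u, w) ∉ E2 ∧ G.Adj u w) := Iff.rfl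

lemma patch_adj_of_not_mem (E2 S : Set (Sym2 V)) (G : SimpleGraph V) {u w : V}
    (h : s(u, w) ∉ E2) : (patch E2 S G).Adj u w ↔ G.Adj u w := by
  rw [patch_adj]
  tauto

lemma lc_iff (v : V) (G H : SimpleGraph V) (hv : ∀ u, G.Adj v u ↔ H.Adj v u) (u w : V) :
    ((localComp G v).Adj u w ↔ (localComp H v).Adj u w) ↔ (G.Adj u w ↔ H.Adj u w) := by
  by_cases huw : u = w
  · subst huw
    exact iff_of_true
      (iff_of_false ((localComp G v).irrefl (v := u)) ((localComp H v).irrefl (v := u)))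
      (iff_of_false (G.irrefl (v := u)) (H.irrefl (v := u)))
  · have h1 := hv u
    have h2 := hv w
    by_cases hcase : G.Adj v u ∧ G.Adj v w
    · have hcase' : H.Adj v u ∧ H.Adj v w := ⟨h1.mp hcase.1, h2.mp hcase.2⟩
      have e1 : (localComp G v).Adj u w ↔ ¬ G.Adj u w := by rw [localComp_adj]; tauto
      have e2 : (localComp H v).Adj u w ↔ ¬ H.Adj u w := by rw [localComp_adj]; tauto
      rw [e1, e2, not_iff_not]
    · have hcase' : ¬ (H.Adj v u ∧ H.Adj v w) := fun h => hcase ⟨h1.mpr h.1, h2.mpr h.2⟩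
      have e1 : (localComp G v).Adj u w ↔ G.Adj u w := by rw [localComp_adj]; tauto
      have e2 : (localComp H v).Adj u w ↔ H.Adj u w := by rw [localComp_adj]; tauto
      rw [e1, e2]

lemma fold_iff (E1 : Set (Sym2 V)) :
    ∀ (l : List V), (∀ v ∈ l, ∀ u, u ≠ v → s(v, u) ∈ E1) →
    ∀ G H : SimpleGraph V, (∀ e ∈ E1, (e ∈ G.edgeSet ↔ e ∈ H.edgeSet)) →
    ∀ u w, ((l.foldl localComp G).Adj u w ↔ (l.foldl localComp H).Adj u w) ↔
      (G.Adj u w ↔ H.Adj u w) := by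
  intro l
  induction l with
  | nil => intro _ G H _ u w; exact Iff.rfl
  | cons v t ih =>
    intro hl1 G H hGH u w
    have hv : ∀ x, G.Adj v x ↔ H.Adj v x := by
      intro x
      by_cases hx : x = v
      · rw [hx]; exact iff_of_false (G.irrefl (v := v)) (H.irrefl (v := v))
      · have := hGH _ (hl1 v (List.mem_cons_self (a := v) (l := t)) x hx)
        simpa [SimpleGraph.mem_edgeSet] using this
    have hstep := lc_iff v G H hv
    have hGH' : ∀ e ∈ E1, (e ∈ (localComp G v).edgeSet ↔ e ∈ (localComp H v).edgeSet) := by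
      intro e
      induction e using Sym2.ind with
      | _ a b =>
        intro he
        simp only [SimpleGraph.mem_edgeSet]
        exact (hstep a b).mpr (by simpa [SimpleGraph.mem_edgeSet] using hGH _ he)
    have h2 := ih (fun x hx u hu => hl1 x (List.mem_cons_of_mem _ hx) u hu)
      (localComp G v) (localComp H v) hGH' u w
    simpa [List.foldl_cons] using h2.trans (hstep u w)

def S0fun (l : List V) (B : Set (Sym2 V)) (G : SimpleGraph V) : Set (Sym2 V) :=
  {e | e ∈ G.edgeSet ↔ (e ∈ (l.foldl localComp G).edgeSet ↔ e ∈ B)}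

def S1fun (E2 : Set (Sym2 V)) (f : ↥E2 → Bool) : Set (Sym2 V) :=
  {e | ∃ h : e ∈ E2, f ⟨e, h⟩ = true}

set_option maxHeartbeats 1000000 in
lemma card_key {V : Type*} [Fintype V] [DecidableEq V]
    (E1 E2 A B : Set (Sym2 V)) (l : List V) (P : SimpleGraph V → Prop)
    (hPpatch : ∀ S G, P G → P (patch E2 S G))
    (hl1 : ∀ v ∈ l, ∀ u, u ≠ v → s(v, u) ∈ E1)
    (hdisj : ∀ e ∈ E1, e ∉ E2)
    (hE2nd : ∀ e ∈ E2, ¬ e.IsDiag)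
    (hB : B ⊆ E2) :
    Nat.card {G : SimpleGraph V // P G ∧ G.edgeSet ∩ E1 = A} =
      Nat.card {G : SimpleGraph V // P G ∧ G.edgeSet ∩ E1 = A ∧
        (l.foldl localComp G).edgeSet ∩ E2 = B} * 2 ^ Nat.card ↥E2 := by
  classical
  have hagree : ∀ (S : Set (Sym2 V)) (G : SimpleGraph V), ∀ e ∈ E1,
      (e ∈ (patch E2 S G).edgeSet ↔ e ∈ G.edgeSet) := by
    intro S G e
    induction e using Sym2.ind with
    | _ a b =>
      intro he
      have h2 := hdisj _ he
      simp only [SimpleGraph.mem_edgeSet, patch_adj]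
      tauto
  have hfold := fold_iff E1 l hl1
  have hA' : ∀ S G, G.edgeSet ∩ E1 = A → (patch E2 S G).edgeSet ∩ E1 = A := by
    intro S G hG
    rw [← hG]
    ext e
    simp only [Set.mem_inter_iff]
    exact ⟨fun ⟨h1, h2⟩ => ⟨(hagree S G e h2).mp h1, h2⟩,
      fun ⟨h1, h2⟩ => ⟨(hagree S G e h2).mpr h1, h2⟩⟩
  have hE2mem : ∀ (S : Set (Sym2 V)) (G : SimpleGraph V) (a b : V), s(a, b) ∈ E2 →
      ((patch E2 S G).Adj a b ↔ s(a, b) ∈ S) := by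
    intro S G a b he
    have hne : a ≠ b := fun h => hE2nd _ he (Sym2.mk_isDiag_iff.mpr h)
    rw [patch_adj]
    tauto
  have hE2mem' : ∀ (S : Set (Sym2 V)) (G : SimpleGraph V), ∀ e ∈ E2,
      (e ∈ (patch E2 S G).edgeSet ↔ e ∈ S) := by
    intro S G e
    induction e using Sym2.ind with
    | _ a b =>
      intro he
      rw [SimpleGraph.mem_edgeSet]
      exact hE2mem S G a b he
  have key2 : ∀ (S : Set (Sym2 V)) (G : SimpleGraph V), ∀ e ∈ E2,
      (e ∈ (l.foldl localComp (patch E2 S G)).edgeSet ↔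
        ((e ∈ (l.foldl localComp G).edgeSet) ↔ (e ∈ S ↔ e ∈ G.edgeSet))) := by
    intro S G e
    induction e using Sym2.ind with
    | _ a b =>
      intro he
      have h1 := hfold (patch E2 S G) G (hagree S G) a b
      have h2 := hE2mem S G a b he
      simp only [SimpleGraph.mem_edgeSet]
      tauto
  have hEq : {G : SimpleGraph V // P G ∧ G.edgeSet ∩ E1 = A} ≃
      {G : SimpleGraph V // P G ∧ G.edgeSet ∩ E1 = A ∧
        (l.foldl localComp G).edgeSet ∩ E2 = B} × (↥E2 → Bool) := by
    refine ⟨fun G => (⟨patch E2 (S0fun l B G.1) G.1, ?_, ?_, ?_⟩,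
        fun e => decide ((e : Sym2 V) ∈ G.1.edgeSet)),
      fun p => ⟨patch E2 (S1fun E2 p.2) p.1.1, ?_, ?_⟩, ?_, ?_⟩
    · exact hPpatch _ _ G.2.1
    · exact hA' _ _ G.2.2
    · ext e
      simp only [Set.mem_inter_iff]
      constructor
      · rintro ⟨h1, h2⟩
        have h3 := (key2 _ G.1 e h2).mp h1
        have h4 : e ∈ S0fun l B G.1 ↔ (e ∈ G.1.edgeSet ↔
            (e ∈ (l.foldl localComp G.1).edgeSet ↔ e ∈ B)) := Iff.rfl
        tauto
      · intro hb
        have h2 := hB hb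
        refine ⟨(key2 _ G.1 e h2).mpr ?_, h2⟩
        have h4 : e ∈ S0fun l B G.1 ↔ (e ∈ G.1.edgeSet ↔
            (e ∈ (l.foldl localComp G.1).edgeSet ↔ e ∈ B)) := Iff.rfl
        tauto
    · exact hPpatch _ _ p.1.2.1
    · exact hA' _ _ p.1.2.2.1
    · intro G
      apply Subtype.ext
      show patch E2 (S1fun E2 (fun e => decide ((e : Sym2 V) ∈ G.1.edgeSet)))
        (patch E2 (S0fun l B G.1) G.1) = G.1
      ext a b
      by_cases he : s(a, b) ∈ E2
      · have hne : a ≠ b := fun h => hE2nd _ he (Sym2.mk_isDiag_iff.mpr h)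
        have h1 := hE2mem (S1fun E2 (fun e => decide ((e : Sym2 V) ∈ G.1.edgeSet)))
          (patch E2 (S0fun l B G.1) G.1) a b he
        have h2 : s(a, b) ∈ S1fun E2 (fun e => decide ((e : Sym2 V) ∈ G.1.edgeSet)) ↔
            G.1.Adj a b := by
          simp only [S1fun, Set.mem_setOf_eq, decide_eq_true_eq, SimpleGraph.mem_edgeSet]
          exact ⟨fun ⟨_, h⟩ => h, fun h => ⟨he, h⟩⟩
        rw [h1, h2]
      · exact (patch_adj_of_not_mem E2 _ _ he).trans (patch_adj_of_not_mem E2 _ _ he)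
    · intro p
      obtain ⟨⟨G₀, h₀⟩, f⟩ := p
      refine Prod.ext ?_ ?_
      · apply Subtype.ext
        show patch E2 (S0fun l B (patch E2 (S1fun E2 f) G₀)) (patch E2 (S1fun E2 f) G₀) = G₀
        ext a b
        by_cases he : s(a, b) ∈ E2
        · have hne : a ≠ b := fun h => hE2nd _ he (Sym2.mk_isDiag_iff.mpr h)
          have h1 := hE2mem (S0fun l B (patch E2 (S1fun E2 f) G₀))
            (patch E2 (S1fun E2 f) G₀) a b he
          rw [h1]
          have hrel := hfold (patch E2 (S1fun E2 f) G₀) G₀ (hagree _ _) a b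
          have hb0 : s(a, b) ∈ (l.foldl localComp G₀).edgeSet ↔ s(a, b) ∈ B := by
            constructor
            · intro h
              rw [← h₀.2.2]
              exact ⟨h, he⟩
            · intro h
              rw [← h₀.2.2] at h
              exact h.1
          have hS0 : s(a, b) ∈ S0fun l B (patch E2 (S1fun E2 f) G₀) ↔
              (s(a, b) ∈ (patch E2 (S1fun E2 f) G₀).edgeSet ↔
                ((s(a, b) ∈ (l.foldl localComp (patch E2 (S1fun E2 f) G₀)).edgeSet) ↔
                  s(a, b) ∈ B)) := Iff.rfl
          rw [hS0]
          simp only [SimpleGraph.mem_edgeSet] at hb0 ⊢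
          revert hrel hb0
          generalize (patch E2 (S1fun E2 f) G₀).Adj a b = p1
          generalize (l.foldl localComp (patch E2 (S1fun E2 f) G₀)).Adj a b = p2
          generalize (l.foldl localComp G₀).Adj a b = p3
          generalize G₀.Adj a b = p4
          generalize (s(a, b) ∈ B) = p5
          tauto
        · exact (patch_adj_of_not_mem E2 _ _ he).trans (patch_adj_of_not_mem E2 _ _ he)
      · funext e
        show decide ((e : Sym2 V) ∈ (patch E2 (S1fun E2 f) G₀).edgeSet) = f e
        obtain ⟨e, he⟩ := e
        have h1 : (e ∈ (patch E2 (S1fun E2 f) G₀).edgeSet) ↔ (f ⟨e, he⟩ = true) :=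
          (hE2mem' _ _ e he).trans ⟨fun ⟨_, h⟩ => h, fun h => ⟨he, h⟩⟩
        by_cases hf : f ⟨e, he⟩ = true
        · rw [hf]
          exact decide_eq_true (h1.mpr hf)
        · rw [(Bool.not_eq_true _).mp hf]
          exact decide_eq_false (fun h => hf (h1.mp h))
  rw [Nat.card_congr hEq, Nat.card_prod, Nat.card_fun]
  simp [Nat.card_eq_fintype_card]

/-- Conditional independence under local complementations. Let `W ⊆ V̂ ⊆ [n]`,
`U = [n] ∖ V̂`, fix a graph `Ĝ` on `V̂` and a sequence `v₁, …, v_t ∈ W`. Let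
`G` be uniformly random conditioned on `G[V̂] = Ĝ` and `G′ = G*v₁*⋯*v_t`.
With `E₁` the pairs inside `V̂` together with the pairs between `W` and `U`,
and `E₂` the pairs inside `U` together with the pairs between `V̂ ∖ W` and `U`,
for every `A ⊆ E₁` and `B ⊆ E₂` we have
`P[E(G)∩E₁ = A ∧ E(G′)∩E₂ = B] = P[E(G)∩E₁ = A]·2^{−|E₂|}`. -/
theorem complementing_independence (n : ℕ) (Vh W : Finset (Fin n)) (hW : W ⊆ Vh)
    (Ghat : SimpleGraph (Fin n)) (hGhat : ∀ u w, Ghat.Adj u w → u ∈ Vh ∧ w ∈ Vh)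
    (l : List (Fin n)) (hl : ∀ v ∈ l, v ∈ W)
    (E1 E2 : Set (Sym2 (Fin n)))
    (hE1 : E1 = {e | ¬ e.IsDiag ∧ ∀ v ∈ e, v ∈ Vh} ∪
      {e | ∃ u ∈ W, ∃ w ∈ (Vhᶜ : Finset (Fin n)), e = s(u, w)})
    (hE2 : E2 = {e | ¬ e.IsDiag ∧ ∀ v ∈ e, v ∈ (Vhᶜ : Finset (Fin n))} ∪
      {e | ∃ u ∈ Vh \ W, ∃ w ∈ (Vhᶜ : Finset (Fin n)), e = s(u, w)})
    (A B : Set (Sym2 (Fin n))) (hA : A ⊆ E1) (hB : B ⊆ E2) :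
    (Nat.card {G : SimpleGraph (Fin n) //
        (∀ u ∈ Vh, ∀ w ∈ Vh, (G.Adj u w ↔ Ghat.Adj u w)) ∧
        G.edgeSet ∩ E1 = A ∧ (l.foldl localComp G).edgeSet ∩ E2 = B} : ℝ) /
      (Nat.card {G : SimpleGraph (Fin n) //
        ∀ u ∈ Vh, ∀ w ∈ Vh, (G.Adj u w ↔ Ghat.Adj u w)} : ℝ)
    = (Nat.card {G : SimpleGraph (Fin n) //
        (∀ u ∈ Vh, ∀ w ∈ Vh, (G.Adj u w ↔ Ghat.Adj u w)) ∧
        G.edgeSet ∩ E1 = A} : ℝ) /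
      (Nat.card {G : SimpleGraph (Fin n) //
        ∀ u ∈ Vh, ∀ w ∈ Vh, (G.Adj u w ↔ Ghat.Adj u w)} : ℝ) *
      ((2 : ℝ) ^ (Nat.card ↥E2))⁻¹ := by
  classical
  have hE1v : ∀ v ∈ W, ∀ u : Fin n, u ≠ v → s(v, u) ∈ E1 := by
    intro v hv u hu
    rw [hE1]
    simp only [Set.mem_union, Set.mem_setOf_eq]
    by_cases h : u ∈ Vh
    · left
      constructor
      · rw [Sym2.mk_isDiag_iff]
        exact fun hvu => hu hvu.symm
      · intro x hx
        rw [Sym2.mem_iff] at hx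
        rcases hx with rfl | rfl
        · exact hW hv
        · exact h
    · right
      exact ⟨v, hv, u, Finset.mem_compl.mpr h, rfl⟩
  have hE1Vh : ∀ u ∈ Vh, ∀ w ∈ Vh, u ≠ w → s(u, w) ∈ E1 := by
    intro u hu w hw huw
    rw [hE1]
    simp only [Set.mem_union, Set.mem_setOf_eq]
    left
    constructor
    · rw [Sym2.mk_isDiag_iff]
      exact huw
    · intro x hx
      rw [Sym2.mem_iff] at hx
      rcases hx with rfl | rfl
      · exact hu
      · exact hw
  have hE2nd : ∀ e ∈ E2, ¬ e.IsDiag := by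
    intro e he
    rw [hE2] at he
    rcases he with ⟨h1, -⟩ | ⟨u, hu, w, hw, rfl⟩
    · exact h1
    · rw [Sym2.mk_isDiag_iff]
      intro h
      rw [Finset.mem_compl] at hw
      exact hw (h ▸ (Finset.mem_sdiff.mp hu).1)
  have hdisj : ∀ e ∈ E1, e ∉ E2 := by
    intro e
    induction e using Sym2.ind with
    | _ a b =>
      intro he1 he2
      rw [hE1] at he1
      rw [hE2] at he2
      rcases he1 with ⟨hnd, hall⟩ | ⟨u, hu, w, hw, heq⟩
      · rcases he2 with ⟨hnd2, hall2⟩ | ⟨u, hu, w, hw, heq⟩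
        · have h1 := hall a (Sym2.mem_mk_left a b)
          have h2 := hall2 a (Sym2.mem_mk_left a b)
          exact (Finset.mem_compl.mp h2) h1
        · have hwmem : w ∈ s(a, b) := heq ▸ Sym2.mem_mk_right u w
          exact (Finset.mem_compl.mp hw) (hall w hwmem)
      · rcases he2 with ⟨hnd2, hall2⟩ | ⟨u', hu', w', hw', heq'⟩
        · have humem : u ∈ s(a, b) := heq ▸ Sym2.mem_mk_left u w
          exact (Finset.mem_compl.mp (hall2 u humem)) (hW hu)
        · have h := heq.symm.trans heq'
          rw [Sym2.eq_iff] at h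
          rcases h with ⟨h1, h2⟩ | ⟨h1, h2⟩
          · exact (Finset.mem_sdiff.mp hu').2 (h1 ▸ hu)
          · exact (Finset.mem_compl.mp hw') (h1 ▸ hW hu)
  have hPpatch : ∀ (S : Set (Sym2 (Fin n))) (G : SimpleGraph (Fin n)),
      (∀ u ∈ Vh, ∀ w ∈ Vh, (G.Adj u w ↔ Ghat.Adj u w)) →
      ∀ u ∈ Vh, ∀ w ∈ Vh, ((patch E2 S G).Adj u w ↔ Ghat.Adj u w) := by
    intro S G hG u hu w hw
    by_cases huw : u = w
    · subst huw
      exact iff_of_false ((patch E2 S G).irrefl) (Ghat.irrefl)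
    · have h1 := hE1Vh u hu w hw huw
      rw [patch_adj_of_not_mem E2 S G (hdisj _ h1)]
      exact hG u hu w hw
  have key : Nat.card {G : SimpleGraph (Fin n) //
        (∀ u ∈ Vh, ∀ w ∈ Vh, (G.Adj u w ↔ Ghat.Adj u w)) ∧ G.edgeSet ∩ E1 = A} =
      Nat.card {G : SimpleGraph (Fin n) //
        (∀ u ∈ Vh, ∀ w ∈ Vh, (G.Adj u w ↔ Ghat.Adj u w)) ∧
        G.edgeSet ∩ E1 = A ∧ (l.foldl localComp G).edgeSet ∩ E2 = B} * 2 ^ Nat.card ↥E2 :=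
    card_key E1 E2 A B l (fun G => ∀ u ∈ Vh, ∀ w ∈ Vh, (G.Adj u w ↔ Ghat.Adj u w))
      hPpatch (fun v hv => hE1v v (hl v hv)) hdisj hE2nd hB
  rw [key]
  push_cast
  rw [div_mul_eq_mul_div, mul_assoc,
    mul_inv_cancel₀ (by positivity : ((2 : ℝ) ^ Nat.card ↥E2) ≠ 0), mul_one]
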